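/- Let f : ℝ² → ℝ² be continuous and let N₀, N₁ be disjoint h-sets such that all four horizontal covering relations hold: N₀ ⟹ N₀, N₀ ⟹ N₁, N₁ ⟹ N₀, N₁ ⟹ N₁. Then for every n ≥ 1 and every sequence (i₀,…,i_{n-1}) ∈ {0,1}^n there exists x ∈ int N_{i₀} with f^n(x) = x and f^j(x) ∈ int N_{i_j} for all j. -/

import Mathlib

/-- The h-set `[a,b] × [-r,r] ⊂ ℝ²`. -/
def HSet (a b r : ℝ) : Set (ℝ × ℝ) := Set.Icc a b ×ˢ Set.Icc (-r) r

/-- Left edge `{a} × [-r,r]`. -/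
def LeftEdge (a r : ℝ) : Set (ℝ × ℝ) := ({a} : Set ℝ) ×ˢ Set.Icc (-r) r

/-- Right edge `{b} × [-r,r]`. -/
def RightEdge (b r : ℝ) : Set (ℝ × ℝ) := ({b} : Set ℝ) ×ˢ Set.Icc (-r) r

/-- Horizontal boundary `[a,b] × {-r,r}`. -/
def HorizBdry (a b r : ℝ) : Set (ℝ × ℝ) := Set.Icc a b ×ˢ ({-r, r} : Set ℝ)

/-- Left side `(-∞,a) × ℝ`. -/
def LeftSide (a : ℝ) : Set (ℝ × ℝ) := Set.Iio a ×ˢ (Set.univ : Set ℝ)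

/-- Right side `(b,∞) × ℝ`. -/
def RightSide (b : ℝ) : Set (ℝ × ℝ) := Set.Ioi b ×ˢ (Set.univ : Set ℝ)

/-- `N₀ = [a₀,b₀] × [-r,r]` `g`-covers `N₁ = [a₁,b₁] × [-r,r]` horizontally. -/
def CoversH (g : ℝ × ℝ → ℝ × ℝ) (a₀ b₀ a₁ b₁ r : ℝ) : Prop :=
  g '' HSet a₀ b₀ r ⊆
      (LeftSide a₁ ∪ HSet a₁ b₁ r ∪ RightSide b₁) \ HorizBdry a₁ b₁ r ∧
  ((g '' LeftEdge a₀ r ⊆ LeftSide a₁ ∧ g '' RightEdge b₀ r ⊆ RightSide b₁) ∨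
   (g '' LeftEdge a₀ r ⊆ RightSide b₁ ∧ g '' RightEdge b₀ r ⊆ LeftSide a₁))



open Set Real Finset

noncomputable section


noncomputable def Complex.abs : AbsoluteValue ℂ ℝ where
  toFun z := ‖z‖
  map_mul' := norm_mul
  nonneg' := norm_nonneg
  eq_zero' _ := norm_eq_zero
  add_le' := norm_add_le

@[simp] lemma Complex.abs_apply (z : ℂ) : Complex.abs z = ‖z‖ := rfl

namespace Horseshoe

def clampR (lo hi x : ℝ) : ℝ := max lo (min x hi)

lemma clampR_mem {lo hi : ℝ} (h : lo ≤ hi) (x : ℝ) : clampR lo hi x ∈ Set.Icc lo hi :=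
  ⟨le_max_left _ _, max_le h (min_le_right _ _)⟩

lemma clampR_of_mem {lo hi x : ℝ} (hx : x ∈ Set.Icc lo hi) : clampR lo hi x = x := by
  simp [clampR, min_eq_left hx.2, max_eq_right hx.1]

lemma clampR_idem {lo hi : ℝ} (h : lo ≤ hi) (x : ℝ) :
    clampR lo hi (clampR lo hi x) = clampR lo hi x :=
  clampR_of_mem (clampR_mem h x)

lemma clampR_lip (lo hi x y : ℝ) : |clampR lo hi x - clampR lo hi y| ≤ |x - y| := by
  have h1 : |clampR lo hi x - clampR lo hi y| ≤ max |min x hi - min y hi| |lo - lo| := by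
    simpa [clampR, max_comm lo] using abs_max_sub_max_le_max (min x hi) lo (min y hi) lo
  have h2 : |min x hi - min y hi| ≤ max |x - y| |hi - hi| := abs_min_sub_min_le_max _ _ _ _
  simp only [sub_self, abs_zero] at h1 h2
  calc |clampR lo hi x - clampR lo hi y| ≤ _ := h1
    _ ≤ |x - y| := by simpa using h2

lemma continuous_clampR (lo hi : ℝ) : Continuous (clampR lo hi) :=
  continuous_const.max (continuous_id.min continuous_const)

lemma prod_tele (w : ℕ → ℂ) (hw : ∀ j, w j ≠ 0) (n : ℕ) :
    ∏ j ∈ Finset.range n, (w (j + 1) / w j) = w n / w 0 := by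
  induction n with
  | zero => simp [(hw 0)]
  | succ n ih =>
      rw [Finset.prod_range_succ, ih, div_mul_div_comm]
      rw [div_eq_div_iff (by simp [hw]) (hw 0)]
      ring

lemma unit_mul (z w : ℂ) (hz : z ≠ 0) (hw : w ≠ 0) :
    z / (Complex.abs z : ℂ) * (w / (Complex.abs w : ℂ)) = z * w / (Complex.abs (z * w) : ℂ) := by
  rw [map_mul]
  have h1 : (Complex.abs z : ℂ) ≠ 0 := by simpa using (AbsoluteValue.ne_zero Complex.abs hz)
  have h2 : (Complex.abs w : ℂ) ≠ 0 := by simpa using (AbsoluteValue.ne_zero Complex.abs hw)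
  push_cast
  field_simp

lemma exp_arg_unit (z : ℂ) (hz : z ≠ 0) :
    Complex.exp ((Complex.arg z : ℂ) * Complex.I) = z / (Complex.abs z : ℂ) := by
  have h := Complex.norm_mul_exp_arg_mul_I z
  have h1 : (Complex.abs z : ℂ) ≠ 0 := by simpa using (AbsoluteValue.ne_zero Complex.abs hz)
  rw [eq_div_iff h1, mul_comm]
  exact h

/-- A continuous global branch of the argument for a nonvanishing map that factors
through a rectangle. -/
lemma exists_theta (α β γ δ : ℝ) (hab : α ≤ β) (hcd : γ ≤ δ)
    (g : ℝ × ℝ → ℂ) (hg : Continuous g)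
    (hinv : ∀ p : ℝ × ℝ, g p = g (clampR α β p.1, clampR γ δ p.2))
    (h0 : ∀ p, g p ≠ 0) :
    ∃ θ : ℝ × ℝ → ℝ, Continuous θ ∧
      ∀ p, g p = (Complex.abs (g p) : ℂ) * Complex.exp ((θ p : ℂ) * Complex.I) := by
  classical
  set K : Set (ℝ × ℝ) := Set.Icc α β ×ˢ Set.Icc γ δ with hK
  have hKc : IsCompact K := isCompact_Icc.prod isCompact_Icc
  have hKne : K.Nonempty := ⟨(α, γ), by simp [hK, hab, hcd]⟩
  obtain ⟨p₀, hp₀, hmin⟩ :=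
    hKc.exists_isMinOn hKne ((continuous_norm.comp hg).continuousOn)
  set m := Complex.abs (g p₀) with hm
  have hm0 : 0 < m := AbsoluteValue.pos Complex.abs (h0 p₀)
  have hmle : ∀ q ∈ K, m ≤ Complex.abs (g q) := fun q hq => hmin hq
  have hUC0 := hKc.uniformContinuousOn_of_continuous hg.continuousOn
  rw [Metric.uniformContinuousOn_iff] at hUC0
  obtain ⟨d, hd, hUC⟩ := hUC0 m hm0
  obtain ⟨N1, hN1⟩ := exists_nat_gt (max (β - α) (δ - γ) / d)
  set N : ℕ := N1 + 1 with hNdef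
  have hNpos : (0:ℝ) < N := by positivity
  have hmaxlt : max (β - α) (δ - γ) < N * d := by
    rw [div_lt_iff₀ hd] at hN1
    calc max (β - α) (δ - γ) < N1 * d := hN1
      _ ≤ N * d := by
          have : (N1 : ℝ) ≤ N := by exact_mod_cast Nat.le_succ N1
          nlinarith
  have hmesh1 : (β - α)/N < d := by
    rw [div_lt_iff₀ hNpos]
    calc β - α ≤ max (β - α) (δ - γ) := le_max_left _ _
      _ < N * d := hmaxlt
      _ = d * N := by ring
  have hmesh2 : (δ - γ)/N < d := by
    rw [div_lt_iff₀ hNpos]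
    calc δ - γ ≤ max (β - α) (δ - γ) := le_max_right _ _
      _ < N * d := hmaxlt
      _ = d * N := by ring
  have hmesh1nn : 0 ≤ (β - α)/N := by
    apply div_nonneg (by linarith) (le_of_lt hNpos)
  have hmesh2nn : 0 ≤ (δ - γ)/N := by
    apply div_nonneg (by linarith) (le_of_lt hNpos)
  -- key uniform estimate
  have key : ∀ P Q : ℝ × ℝ, |P.1 - Q.1| ≤ (β - α)/N → |P.2 - Q.2| ≤ (δ - γ)/N →
      Complex.abs (g P - g Q) < Complex.abs (g Q) := by
    intro P Q h1 h2
    set P' : ℝ × ℝ := (clampR α β P.1, clampR γ δ P.2) with hP'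
    set Q' : ℝ × ℝ := (clampR α β Q.1, clampR γ δ Q.2) with hQ'
    have hPK : P' ∈ K := ⟨clampR_mem hab _, clampR_mem hcd _⟩
    have hQK : Q' ∈ K := ⟨clampR_mem hab _, clampR_mem hcd _⟩
    have hdist : dist P' Q' < d := by
      rw [Prod.dist_eq]
      apply max_lt
      · rw [Real.dist_eq]
        exact lt_of_le_of_lt ((clampR_lip _ _ _ _).trans h1) hmesh1
      · rw [Real.dist_eq]
        exact lt_of_le_of_lt ((clampR_lip _ _ _ _).trans h2) hmesh2
    have hlt := hUC P' hPK Q' hQK hdist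
    rw [Complex.dist_eq] at hlt
    rw [hinv P, hinv Q]
    exact lt_of_lt_of_le hlt (hmle Q' hQK)
  have hslit : ∀ P Q : ℝ × ℝ, |P.1 - Q.1| ≤ (β - α)/N → |P.2 - Q.2| ≤ (δ - γ)/N →
      g P / g Q ∈ Complex.slitPlane := by
    intro P Q h1 h2
    have hk := key P Q h1 h2
    have hQ0 := h0 Q
    refine Complex.mem_slitPlane_iff.2 (Or.inl ?_)
    have habs : Complex.abs (g P / g Q - 1) < 1 := by
      rw [show g P / g Q - 1 = (g P - g Q) / g Q by field_simp]
      rw [map_div₀, div_lt_one (AbsoluteValue.pos Complex.abs hQ0)]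
      exact hk
    have h3 : (1 : ℝ) - (g P / g Q).re ≤ Complex.abs (g P / g Q - 1) := by
      calc 1 - (g P / g Q).re = -((g P / g Q - 1).re) := by simp
        _ ≤ |(g P / g Q - 1).re| := neg_le_abs _
        _ ≤ Complex.abs _ := Complex.abs_re_le_norm _
    linarith
  -- grids
  set t : ℕ → ℝ := fun i => α + i * ((β - α)/N) with ht
  set s : ℕ → ℝ := fun j => γ + j * ((δ - γ)/N) with hs
  have htstep : ∀ i : ℕ, t (i+1) = t i + (β - α)/N := by
    intro i; simp only [ht]; push_cast; ring
  have hsstep : ∀ j : ℕ, s (j+1) = s j + (δ - γ)/N := by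
    intro j; simp only [hs]; push_cast; ring
  have hminbd : ∀ (x b : ℝ) (c : ℝ), 0 ≤ c → |min x (b + c) - min x b| ≤ c := by
    intro x b c hc
    have low : min x b ≤ min x (b + c) := min_le_min (le_refl x) (by linarith)
    have high : min x (b + c) ≤ min x b + c := by
      rcases le_total x b with h | h
      · calc min x (b + c) ≤ x := min_le_left _ _
          _ = min x b := (min_eq_left h).symm
          _ ≤ min x b + c := by linarith
      · calc min x (b + c) ≤ b + c := min_le_right _ _
          _ = min x b + c := by rw [min_eq_right h]
    rw [abs_le]; constructor <;> linarith
  have hrow : ∀ (x : ℝ) (i : ℕ), |min x (t (i+1)) - min x (t i)| ≤ (β - α)/N := by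
    intro x i
    rw [htstep i]
    exact hminbd x (t i) _ hmesh1nn
  have hcol : ∀ (y : ℝ) (j : ℕ), |min y (s (j+1)) - min y (s j)| ≤ (δ - γ)/N := by
    intro y j
    rw [hsstep j]
    exact hminbd y (s j) _ hmesh2nn
  -- the lift
  refine ⟨fun p => Complex.arg (g (α, γ))
      + ∑ i ∈ Finset.range N, Complex.arg (g (min p.1 (t (i+1)), γ) / g (min p.1 (t i), γ))
      + ∑ j ∈ Finset.range N, Complex.arg (g (p.1, min p.2 (s (j+1))) / g (p.1, min p.2 (s j))),
      ?_, ?_⟩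
  · -- continuity
    apply Continuous.add
    apply Continuous.add continuous_const
    · apply continuous_finset_sum
      intro i _
      have hc : Continuous fun p : ℝ × ℝ => g (min p.1 (t (i+1)), γ) / g (min p.1 (t i), γ) := by
        apply Continuous.div
        · exact hg.comp (((continuous_fst.min continuous_const).prodMk continuous_const))
        · exact hg.comp (((continuous_fst.min continuous_const).prodMk continuous_const))
        · intro p; exact h0 _
      refine continuous_iff_continuousAt.2 fun p => (Complex.continuousAt_arg ?_).comp hc.continuousAt
      exact hslit _ _ (hrow p.1 i) (by simpa using hmesh2nn)
    · apply continuous_finset_sum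
      intro j _
      have hc : Continuous fun p : ℝ × ℝ => g (p.1, min p.2 (s (j+1))) / g (p.1, min p.2 (s j)) := by
        apply Continuous.div
        · exact hg.comp ((continuous_fst.prodMk (continuous_snd.min continuous_const)))
        · exact hg.comp ((continuous_fst.prodMk (continuous_snd.min continuous_const)))
        · intro p; exact h0 _
      refine continuous_iff_continuousAt.2 fun p => (Complex.continuousAt_arg ?_).comp hc.continuousAt
      exact hslit _ _ (by simpa using hmesh1nn) (hcol p.2 j)
  · -- the exponential identity
    intro p
    set u : ℕ → ℂ := fun i => g (min p.1 (t i), γ) with hu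
    set v : ℕ → ℂ := fun j => g (p.1, min p.2 (s j)) with hv
    have hu0 : ∀ i, u i ≠ 0 := fun i => h0 _
    have hv0 : ∀ j, v j ≠ 0 := fun j => h0 _
    have hsplit : ((Complex.arg (g (α, γ))
        + ∑ i ∈ Finset.range N, Complex.arg (u (i+1) / u i)
        + ∑ j ∈ Finset.range N, Complex.arg (v (j+1) / v j) : ℝ) : ℂ) * Complex.I
        = (Complex.arg (g (α, γ)) : ℂ) * Complex.I
          + (∑ i ∈ Finset.range N, (Complex.arg (u (i+1) / u i) : ℂ) * Complex.I)
          + (∑ j ∈ Finset.range N, (Complex.arg (v (j+1) / v j) : ℂ) * Complex.I) := by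
      push_cast
      rw [← Finset.sum_mul, ← Finset.sum_mul]
      ring
    have hexp : Complex.exp (((Complex.arg (g (α, γ))
        + ∑ i ∈ Finset.range N, Complex.arg (u (i+1) / u i)
        + ∑ j ∈ Finset.range N, Complex.arg (v (j+1) / v j) : ℝ) : ℂ) * Complex.I)
        = Complex.exp ((Complex.arg (g (α, γ)) : ℂ) * Complex.I)
          * (∏ i ∈ Finset.range N, Complex.exp ((Complex.arg (u (i+1) / u i) : ℂ) * Complex.I))
          * (∏ j ∈ Finset.range N, Complex.exp ((Complex.arg (v (j+1) / v j) : ℂ) * Complex.I)) := by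
      rw [hsplit, Complex.exp_add, Complex.exp_add, Complex.exp_sum, Complex.exp_sum]
    have hprod : ∀ (w : ℕ → ℂ) (hw : ∀ i, w i ≠ 0),
        ∏ i ∈ Finset.range N, Complex.exp ((Complex.arg (w (i+1) / w i) : ℂ) * Complex.I)
          = (w N / w 0) / (Complex.abs (w N / w 0) : ℂ) := by
      intro w hw
      have hterm : ∀ i ∈ Finset.range N,
          Complex.exp ((Complex.arg (w (i+1) / w i) : ℂ) * Complex.I)
            = (w (i+1) / w i) / (Complex.abs (w (i+1) / w i) : ℂ) :=
        fun i _ => exp_arg_unit _ (div_ne_zero (hw _) (hw _))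
      rw [Finset.prod_congr rfl hterm, Finset.prod_div_distrib, prod_tele w hw N]
      congr 1
      calc ∏ i ∈ Finset.range N, ((Complex.abs (w (i+1) / w i) : ℝ) : ℂ)
          = ((∏ i ∈ Finset.range N, Complex.abs (w (i+1) / w i) : ℝ) : ℂ) := by
            rw [Complex.ofReal_prod]
        _ = ((Complex.abs (∏ i ∈ Finset.range N, (w (i+1) / w i)) : ℝ) : ℂ) := by
            rw [map_prod]
        _ = _ := by rw [prod_tele w hw N]
    -- endpoint identifications
    have hclamp_min_right : ∀ x : ℝ, clampR α β (min x β) = clampR α β x := by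
      intro x
      simp only [clampR]
      rw [min_assoc, min_self]
    have hclamp_min_right' : ∀ y : ℝ, clampR γ δ (min y δ) = clampR γ δ y := by
      intro y
      simp only [clampR]
      rw [min_assoc, min_self]
    have hclamp_min_lo : ∀ x : ℝ, clampR α β (min x α) = α := by
      intro x
      simp only [clampR]
      rw [min_eq_left (le_trans (min_le_right _ _) hab)]
      exact max_eq_left (min_le_right _ _)
    have hclamp_min_lo' : ∀ y : ℝ, clampR γ δ (min y γ) = γ := by
      intro y
      simp only [clampR]
      rw [min_eq_left (le_trans (min_le_right _ _) hcd)]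
      exact max_eq_left (min_le_right _ _)
    have hclamp_lo : clampR α β α = α := clampR_of_mem ⟨le_refl _, hab⟩
    have hclamp_lo' : clampR γ δ γ = γ := clampR_of_mem ⟨le_refl _, hcd⟩
    have ht0 : t 0 = α := by simp [ht]
    have htN : t N = β := by
      simp only [ht]
      field_simp
      ring
    have hs0 : s 0 = γ := by simp [hs]
    have hsN : s N = δ := by
      simp only [hs]
      field_simp
      ring
    have e1 : u 0 = g (α, γ) := by
      show g (min p.1 (t 0), γ) = g (α, γ)
      rw [hinv (min p.1 (t 0), γ), hinv (α, γ)]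
      rw [ht0]
      rw [hclamp_min_lo, hclamp_lo, hclamp_lo']
    have e2 : v 0 = u N := by
      show g (p.1, min p.2 (s 0)) = g (min p.1 (t N), γ)
      rw [hinv (p.1, min p.2 (s 0)), hinv (min p.1 (t N), γ)]
      rw [hs0, htN]
      rw [hclamp_min_lo', hclamp_min_right, hclamp_lo']
    have e3 : v N = g p := by
      show g (p.1, min p.2 (s N)) = g p
      rw [hinv (p.1, min p.2 (s N)), hinv p]
      rw [hsN, hclamp_min_right']
    -- assemble
    show g p = (Complex.abs (g p) : ℂ) * Complex.exp (((Complex.arg (g (α, γ))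
        + ∑ i ∈ Finset.range N, Complex.arg (u (i+1) / u i)
        + ∑ j ∈ Finset.range N, Complex.arg (v (j+1) / v j) : ℝ) : ℂ) * Complex.I)
    rw [hexp, hprod u hu0, hprod v hv0, exp_arg_unit _ (h0 (α, γ)), ← e1, e2, e3]
    have step1 : u 0 / (Complex.abs (u 0) : ℂ) * ((u N / u 0) / (Complex.abs (u N / u 0) : ℂ))
        = u N / (Complex.abs (u N) : ℂ) := by
      rw [unit_mul _ _ (hu0 0) (div_ne_zero (hu0 N) (hu0 0))]
      congr 2 <;> rw [mul_div_cancel₀ _ (hu0 0)]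
    have step2 : u N / (Complex.abs (u N) : ℂ) * ((g p / u N) / (Complex.abs (g p / u N) : ℂ))
        = g p / (Complex.abs (g p) : ℂ) := by
      rw [unit_mul _ _ (hu0 N) (div_ne_zero (h0 p) (hu0 N))]
      congr 2 <;> rw [mul_div_cancel₀ _ (hu0 N)]
    rw [step1, step2]
    have hgp : (Complex.abs (g p) : ℂ) ≠ 0 := by
      simpa using (AbsoluteValue.ne_zero Complex.abs (h0 p))
    field_simp



lemma sin_pos_band {x : ℝ} (hx : 0 < Real.sin x) :
    ∃ k : ℤ, x ∈ Set.Ioo (2 * π * k) (2 * π * k + π) := by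
  refine ⟨⌊x / (2 * π)⌋, ?_⟩
  have h2π : 0 < 2 * π := by positivity
  set k : ℤ := ⌊x / (2 * π)⌋ with hk
  have h1 : (k : ℝ) ≤ x / (2 * π) := Int.floor_le _
  have h2 : x / (2 * π) < k + 1 := Int.lt_floor_add_one _
  have hlow : 2 * π * k ≤ x := by
    rw [← le_div_iff₀' h2π]
    exact h1
  have hhigh : x < 2 * π * k + 2 * π := by
    have := (div_lt_iff₀ h2π).1 h2
    linarith
  set e : ℝ := x - 2 * π * k with he
  have hsin : Real.sin e = Real.sin x := by
    have h5 : e = x + ((-k : ℤ) : ℝ) * (2 * π) := by rw [he]; push_cast; ring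
    rw [h5, Real.sin_add_int_mul_two_pi]
  have he1 : 0 ≤ e := by rw [he]; linarith
  have he2 : e < 2 * π := by rw [he]; linarith
  have hepos : 0 < e := by
    rcases lt_or_eq_of_le he1 with h | h
    · exact h
    · exfalso; rw [← h] at hsin; simp at hsin; linarith
  have heltπ : e < π := by
    by_contra hcon
    push_neg at hcon
    have h3 : 0 ≤ Real.sin (e - π) :=
      Real.sin_nonneg_of_nonneg_of_le_pi (by linarith) (by linarith)
    rw [Real.sin_sub_pi] at h3
    linarith
  constructor
  · have : 0 < e := hepos; rw [he] at this; linarith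
  · have : e < π := heltπ; rw [he] at this; linarith

/-- If `sin ∘ φ > 0` on `[α, β]` then `φ` stays within a single band `(2πk, 2πk+π)`. -/
lemma band (φ : ℝ → ℝ) (hφ : Continuous φ) (α β : ℝ) (hαβ : α ≤ β)
    (h : ∀ t ∈ Set.Icc α β, 0 < Real.sin (φ t)) :
    ∃ k : ℤ, ∀ t ∈ Set.Icc α β, φ t ∈ Set.Ioo (2 * π * k) (2 * π * k + π) := by
  obtain ⟨k₀, hk₀⟩ := sin_pos_band (h α ⟨le_refl _, hαβ⟩)
  refine ⟨k₀, fun t ht => ?_⟩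
  obtain ⟨k, hk⟩ := sin_pos_band (h t ht)
  have hπ : 0 < π := Real.pi_pos
  rcases lt_trichotomy k k₀ with hlt | heq | hgt
  · -- φ t < 2πk + π ≤ 2πk₀ - π < 2πk₀ < φ α ; IVT on [α, t] for value 2πk₀ gives sin = 0
    exfalso
    have hkk : (k : ℝ) + 1 ≤ k₀ := by exact_mod_cast hlt
    have h1 : φ t < 2 * π * k₀ := by
      have := hk.2
      nlinarith
    have h2 : 2 * π * k₀ < φ α := by
      have := hk₀.1
      linarith
    have : (2 * π * k₀) ∈ Set.Icc (φ t) (φ α) := ⟨le_of_lt h1, le_of_lt h2⟩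
    have hsub : Set.Icc (φ t) (φ α) ⊆ φ '' Set.Icc α t :=
      intermediate_value_Icc' ht.1 hφ.continuousOn
    obtain ⟨s, hs, hval⟩ := hsub this
    have hsK : s ∈ Set.Icc α β := ⟨hs.1, le_trans hs.2 ht.2⟩
    have hzero : Real.sin (2 * π * k₀) = 0 := by
      have h4 : (2 : ℝ) * π * k₀ = ((2 * k₀ : ℤ) : ℝ) * π := by push_cast; ring
      rw [h4, Real.sin_int_mul_pi]
    have hpos := h s hsK
    rw [hval, hzero] at hpos
    linarith
  · rw [heq] at hk; exact hk
  · exfalso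
    have hkk : (k₀ : ℝ) + 1 ≤ k := by exact_mod_cast hgt
    have h1 : 2 * π * k₀ + 2 * π ≤ 2 * π * k := by nlinarith
    have h2 : φ α < 2 * π * k₀ + 2 * π := by have := hk₀.2; linarith
    have h3 : 2 * π * k₀ + 2 * π < φ t := by have := hk.1; linarith
    have hmem : (2 * π * k₀ + 2 * π) ∈ Set.Icc (φ α) (φ t) := ⟨le_of_lt h2, le_of_lt h3⟩
    have hsub : Set.Icc (φ α) (φ t) ⊆ φ '' Set.Icc α t :=
      intermediate_value_Icc ht.1 hφ.continuousOn
    obtain ⟨s, hs, hval⟩ := hsub hmem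
    have hsK : s ∈ Set.Icc α β := ⟨hs.1, le_trans hs.2 ht.2⟩
    have hzero : Real.sin (2 * π * k₀ + 2 * π) = 0 := by
      have h4 : (2 : ℝ) * π * k₀ + 2 * π = ((2 * k₀ + 2 : ℤ) : ℝ) * π := by push_cast; ring
      rw [h4, Real.sin_int_mul_pi]
    have := h s hsK
    rw [hval, hzero] at this
    linarith



lemma int_step {u v : ℤ} {t : ℝ} (ht : t ≤ 2 * π) (h : 2 * π * u < 2 * π * v + t) : u ≤ v := by
  have hπ := Real.pi_pos
  have h2 : 2 * π * ((u : ℝ) - v) < 2 * π := by linarith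
  have h3 : ((u : ℝ) - v) < 1 := by nlinarith
  have h4 : ((u - v : ℤ) : ℝ) < 1 := by push_cast; linarith
  have h5 : (u - v : ℤ) < 1 := by exact_mod_cast h4
  omega

/-- Strict Poincaré–Miranda in the plane, standard orientation. -/
lemma pm_strict (α β γ δ : ℝ) (hab : α < β) (hcd : γ < δ) (h : ℝ × ℝ → ℝ × ℝ)
    (hc : Continuous h)
    (hL : ∀ y ∈ Set.Icc γ δ, (h (α, y)).1 < 0) (hR : ∀ y ∈ Set.Icc γ δ, 0 < (h (β, y)).1)
    (hB : ∀ x ∈ Set.Icc α β, 0 < (h (x, γ)).2) (hT : ∀ x ∈ Set.Icc α β, (h (x, δ)).2 < 0) :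
    ∃ p ∈ Set.Icc α β ×ˢ Set.Icc γ δ, h p = 0 := by
  by_contra hno
  push_neg at hno
  set K : Set (ℝ × ℝ) := Set.Icc α β ×ˢ Set.Icc γ δ with hK
  set g : ℝ × ℝ → ℂ := fun p =>
    ((h (clampR α β p.1, clampR γ δ p.2)).1 : ℂ)
      + ((h (clampR α β p.1, clampR γ δ p.2)).2 : ℂ) * Complex.I with hg
  have hclc : Continuous fun p : ℝ × ℝ => (clampR α β p.1, clampR γ δ p.2) :=
    ((continuous_clampR _ _).comp continuous_fst).prodMk
      ((continuous_clampR _ _).comp continuous_snd)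
  have hgc : Continuous g := by
    apply Continuous.add
    · exact Complex.continuous_ofReal.comp (continuous_fst.comp (hc.comp hclc))
    · exact (Complex.continuous_ofReal.comp (continuous_snd.comp (hc.comp hclc))).mul
        continuous_const
  have hginv : ∀ p : ℝ × ℝ, g p = g (clampR α β p.1, clampR γ δ p.2) := by
    intro p
    simp only [hg, clampR_idem hab.le, clampR_idem hcd.le]
  have h0 : ∀ p, g p ≠ 0 := by
    intro p hp0
    have hqK : (clampR α β p.1, clampR γ δ p.2) ∈ K :=
      ⟨clampR_mem hab.le _, clampR_mem hcd.le _⟩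
    apply hno _ hqK
    have := hp0
    rw [hg] at this
    simp only [Complex.ext_iff, Complex.add_re, Complex.ofReal_re, Complex.mul_re,
      Complex.ofReal_im, Complex.I_re, Complex.I_im, Complex.add_im, Complex.mul_im,
      Complex.zero_re, Complex.zero_im] at this
    have h1 : (h (clampR α β p.1, clampR γ δ p.2)).1 = 0 := by linarith [this.1]
    have h2 : (h (clampR α β p.1, clampR γ δ p.2)).2 = 0 := by linarith [this.2]
    exact Prod.ext h1 h2
  obtain ⟨θ, hθc, hθ⟩ := exists_theta α β γ δ hab.le hcd.le g hgc hginv h0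
  have habs_pos : ∀ p, 0 < Complex.abs (g p) := fun p => AbsoluteValue.pos _ (h0 p)
  have hre : ∀ p ∈ K, (h p).1 = Complex.abs (g p) * Real.cos (θ p) := by
    intro p hp
    have h1 : (g p).re = (h p).1 := by
      simp [hg, clampR_of_mem hp.1, clampR_of_mem hp.2]
    have h2 : (g p).re = Complex.abs (g p) * Real.cos (θ p) := by
      conv_lhs => rw [hθ p]
      simp [Complex.exp_ofReal_mul_I_re]
    rw [← h1, h2]
  have him : ∀ p ∈ K, (h p).2 = Complex.abs (g p) * Real.sin (θ p) := by
    intro p hp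
    have h1 : (g p).im = (h p).2 := by
      simp [hg, clampR_of_mem hp.1, clampR_of_mem hp.2]
    have h2 : (g p).im = Complex.abs (g p) * Real.sin (θ p) := by
      conv_lhs => rw [hθ p]
      simp [Complex.exp_ofReal_mul_I_im]
    rw [← h1, h2]
  have hπ := Real.pi_pos
  -- bottom band
  obtain ⟨kB, hkB⟩ := band (fun x => θ (x, γ))
    (hθc.comp (continuous_id.prodMk continuous_const)) α β hab.le (by
      intro x hx
      have hmem : ((x, γ) : ℝ × ℝ) ∈ K := ⟨hx, ⟨le_refl _, hcd.le⟩⟩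
      have := hB x hx
      rw [him _ hmem] at this
      nlinarith [habs_pos ((x, γ) : ℝ × ℝ)])
  -- top band
  obtain ⟨kT, hkT⟩ := band (fun x => θ (x, δ) + π)
    ((hθc.comp (continuous_id.prodMk continuous_const)).add continuous_const) α β hab.le (by
      intro x hx
      have hmem : ((x, δ) : ℝ × ℝ) ∈ K := ⟨hx, ⟨hcd.le, le_refl _⟩⟩
      have := hT x hx
      rw [him _ hmem] at this
      rw [Real.sin_add_pi]
      nlinarith [habs_pos ((x, δ) : ℝ × ℝ)])
  -- right band
  obtain ⟨kR, hkR⟩ := band (fun y => θ (β, y) + π / 2)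
    ((hθc.comp (continuous_const.prodMk continuous_id)).add continuous_const) γ δ hcd.le (by
      intro y hy
      have hmem : ((β, y) : ℝ × ℝ) ∈ K := ⟨⟨hab.le, le_refl _⟩, hy⟩
      have := hR y hy
      rw [hre _ hmem] at this
      rw [Real.sin_add_pi_div_two]
      nlinarith [habs_pos ((β, y) : ℝ × ℝ)])
  -- left band
  obtain ⟨kL, hkL⟩ := band (fun y => θ (α, y) - π / 2)
    ((hθc.comp (continuous_const.prodMk continuous_id)).sub continuous_const) γ δ hcd.le (by
      intro y hy
      have hmem : ((α, y) : ℝ × ℝ) ∈ K := ⟨⟨le_refl _, hab.le⟩, hy⟩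
      have := hL y hy
      rw [hre _ hmem] at this
      rw [Real.sin_sub_pi_div_two]
      nlinarith [habs_pos ((α, y) : ℝ × ℝ)])
  -- corner chase
  have c1B := hkB β ⟨hab.le, le_refl _⟩
  have c1R := hkR γ ⟨le_refl _, hcd.le⟩
  have c2R := hkR δ ⟨hcd.le, le_refl _⟩
  have c2T := hkT β ⟨hab.le, le_refl _⟩
  have c3T := hkT α ⟨le_refl _, hab.le⟩
  have c3L := hkL δ ⟨hcd.le, le_refl _⟩
  have c4B := hkB α ⟨le_refl _, hab.le⟩
  have c4L := hkL γ ⟨le_refl _, hcd.le⟩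
  simp only [Set.mem_Ioo] at c1B c1R c2R c2T c3T c3L c4B c4L
  have hRB : kR = kB := by
    have h1 : kR ≤ kB := int_step (t := 3 * π / 2) (by linarith) (by push_cast; linarith [c1R.1, c1B.2])
    have h2 : kB ≤ kR := int_step (t := π / 2) (by linarith) (by push_cast; linarith [c1B.1, c1R.2])
    omega
  have hTB : kT = kB := by
    rw [hRB] at c2R
    have h1 : kT ≤ kB := int_step (t := 3 * π / 2) (by linarith) (by push_cast; linarith [c2T.1, c2R.2])
    have h2 : kB ≤ kT := int_step (t := π / 2) (by linarith) (by push_cast; linarith [c2R.1, c2T.2])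
    omega
  have hLB : kL = kB - 1 := by
    rw [hTB] at c3T
    have h1 : kL + 1 ≤ kB := int_step (t := 3 * π / 2) (by linarith) (by push_cast; linarith [c3L.1, c3T.2])
    have h2 : kB ≤ kL + 1 := int_step (t := π / 2) (by linarith) (by push_cast; linarith [c3T.1, c3L.2])
    omega
  rw [hLB] at c4L
  have hcontr1 := c4B.1
  have hcontr2 := c4L.2
  push_cast at hcontr2
  linarith

/-- Poincaré–Miranda, standard orientation, nonstrict horizontal conditions. -/
lemma pm_std (α β γ δ : ℝ) (hab : α < β) (hcd : γ < δ) (h : ℝ × ℝ → ℝ × ℝ) (hc : Continuous h)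
    (hL : ∀ y ∈ Set.Icc γ δ, (h (α, y)).1 < 0) (hR : ∀ y ∈ Set.Icc γ δ, 0 < (h (β, y)).1)
    (hB : ∀ x ∈ Set.Icc α β, 0 ≤ (h (x, γ)).2) (hT : ∀ x ∈ Set.Icc α β, (h (x, δ)).2 ≤ 0) :
    ∃ p ∈ Set.Icc α β ×ˢ Set.Icc γ δ, h p = 0 := by
  set K : Set (ℝ × ℝ) := Set.Icc α β ×ˢ Set.Icc γ δ with hKdef
  have hKc : IsCompact K := isCompact_Icc.prod isCompact_Icc
  have hper : ∀ n : ℕ, ∃ p ∈ K, h p = (0, -(1/((n : ℝ)+1)) * ((γ + δ)/2 - p.2)) := by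
    intro n
    have hcpos : (0 : ℝ) < 1/((n : ℝ)+1) := by positivity
    set c : ℝ := 1/((n : ℝ)+1) with hcdef
    obtain ⟨p, hpK, hz⟩ := pm_strict α β γ δ hab hcd
      (fun p => ((h p).1, (h p).2 + c * ((γ + δ)/2 - p.2)))
      (by
        apply Continuous.prodMk
        · exact continuous_fst.comp hc
        · exact (continuous_snd.comp hc).add
            (continuous_const.mul (continuous_const.sub continuous_snd)))
      (by intro y hy; exact hL y hy)
      (by intro y hy; exact hR y hy)
      (by
        intro x hx
        have := hB x hx
        have h2 : (γ + δ)/2 - γ = (δ - γ)/2 := by ring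
        simp only [h2]
        nlinarith)
      (by
        intro x hx
        have := hT x hx
        have h2 : (γ + δ)/2 - δ = -((δ - γ)/2) := by ring
        simp only [h2]
        nlinarith)
    refine ⟨p, hpK, ?_⟩
    have h1 : (h p).1 = 0 := congrArg Prod.fst hz
    have h2 : (h p).2 + c * ((γ + δ)/2 - p.2) = 0 := congrArg Prod.snd hz
    refine Prod.ext h1 ?_
    simp only []
    linarith
  choose P hPK hPz using hper
  obtain ⟨q, hqK, φ, hφ, hconv⟩ := hKc.tendsto_subseq hPK
  refine ⟨q, hqK, ?_⟩
  have hc1 : Filter.Tendsto (fun n => h (P (φ n))) Filter.atTop (nhds (h q)) :=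
    ((hc.tendsto q).comp hconv)
  have hfst : Filter.Tendsto (fun n => (h (P (φ n))).1) Filter.atTop (nhds ((h q).1)) :=
    ((continuous_fst.tendsto _).comp hc1)
  have hsnd : Filter.Tendsto (fun n => (h (P (φ n))).2) Filter.atTop (nhds ((h q).2)) :=
    ((continuous_snd.tendsto _).comp hc1)
  have h1 : (h q).1 = 0 := by
    have hconst : ∀ n, (h (P (φ n))).1 = 0 := by
      intro n
      rw [hPz (φ n)]
    have : Filter.Tendsto (fun n => (h (P (φ n))).1) Filter.atTop (nhds 0) := by
      simp only [hconst]
      exact tendsto_const_nhds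
    exact tendsto_nhds_unique hfst this
  have h2 : (h q).2 = 0 := by
    have hzero : Filter.Tendsto (fun n => (h (P (φ n))).2) Filter.atTop (nhds 0) := by
      apply squeeze_zero_norm (a := fun n => (1/((φ n : ℝ)+1)) * ((δ - γ)/2))
      · intro n
        have hy : (P (φ n)).2 ∈ Set.Icc γ δ := (hPK (φ n)).2
        have hb : |(γ + δ)/2 - (P (φ n)).2| ≤ (δ - γ)/2 := by
          rw [abs_le]
          constructor <;> [linarith [hy.2]; linarith [hy.1]]
        have : (h (P (φ n))).2 = -(1/((φ n : ℝ)+1)) * ((γ + δ)/2 - (P (φ n)).2) := by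
          rw [hPz (φ n)]
        rw [this]
        rw [Real.norm_eq_abs, abs_mul, abs_neg]
        have hpos : |1/((φ n : ℝ)+1)| = 1/((φ n : ℝ)+1) := abs_of_pos (by positivity)
        rw [hpos]
        apply mul_le_mul_of_nonneg_left hb (by positivity)
      · have htop : Filter.Tendsto (fun n => (φ n : ℝ) ) Filter.atTop Filter.atTop :=
          Filter.Tendsto.comp tendsto_natCast_atTop_atTop hφ.tendsto_atTop
        have : Filter.Tendsto (fun n => 1/((φ n : ℝ)+1)) Filter.atTop (nhds 0) := by
          apply Filter.Tendsto.comp tendsto_one_div_add_atTop_nhds_zero_nat hφ.tendsto_atTop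
        simpa using this.mul_const ((δ - γ)/2)
    exact tendsto_nhds_unique hsnd hzero
  exact Prod.ext h1 h2

/-- Poincaré–Miranda with either orientation on the vertical edges. -/
lemma pm (α β γ δ : ℝ) (hab : α < β) (hcd : γ < δ) (h : ℝ × ℝ → ℝ × ℝ)
    (hc : Continuous h)
    (hLR : (∀ y ∈ Set.Icc γ δ, (h (α, y)).1 < 0 ∧ 0 < (h (β, y)).1) ∨
           (∀ y ∈ Set.Icc γ δ, 0 < (h (α, y)).1 ∧ (h (β, y)).1 < 0))
    (hB : ∀ x ∈ Set.Icc α β, 0 ≤ (h (x, γ)).2) (hT : ∀ x ∈ Set.Icc α β, (h (x, δ)).2 ≤ 0) :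
    ∃ p ∈ Set.Icc α β ×ˢ Set.Icc γ δ, h p = 0 := by
  rcases hLR with hstd | hflip
  · exact pm_std α β γ δ hab hcd h hc (fun y hy => (hstd y hy).1) (fun y hy => (hstd y hy).2)
      hB hT
  · have hrefl : Continuous fun p : ℝ × ℝ => ((α + β - p.1, p.2) : ℝ × ℝ) :=
      (continuous_const.sub continuous_fst).prodMk continuous_snd
    have hmem : ∀ x ∈ Set.Icc α β, α + β - x ∈ Set.Icc α β := by
      intro x hx
      exact ⟨by linarith [hx.2], by linarith [hx.1]⟩
    obtain ⟨p, hpK, hz⟩ := pm_std α β γ δ hab hcd (fun p => h (α + β - p.1, p.2))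
      (hc.comp hrefl)
      (by
        intro y hy
        have h2 := (hflip y hy).2
        simpa [show α + β - α = β by ring] using h2)
      (by
        intro y hy
        have h2 := (hflip y hy).1
        simpa [show α + β - β = α by ring] using h2)
      (by intro x hx; exact hB _ (hmem x hx))
      (by intro x hx; exact hT _ (hmem x hx))
    exact ⟨(α + β - p.1, p.2), ⟨hmem p.1 hpK.1, hpK.2⟩, hz⟩

end Horseshoe

namespace Horseshoe

/-- iterate a sequence of maps -/
def seqMap (F : ℕ → (ℝ × ℝ) → (ℝ × ℝ)) : ℕ → (ℝ × ℝ) → (ℝ × ℝ)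
  | 0, p => p
  | Nat.succ j, p => F j (seqMap F j p)

/-- iterate a sequence of boolean maps -/
def boolSeq (g : ℕ → Bool → Bool) : ℕ → Bool
  | 0 => false
  | Nat.succ j => g j (boolSeq g j)

end Horseshoe

open Horseshoe

lemma mem_LeftSide {a : ℝ} {z : ℝ × ℝ} : z ∈ LeftSide a ↔ z.1 < a := by
  unfold LeftSide
  rw [Set.mem_prod]
  simp [Set.mem_Iio]

lemma mem_RightSide {b : ℝ} {z : ℝ × ℝ} : z ∈ RightSide b ↔ b < z.1 := by
  unfold RightSide
  rw [Set.mem_prod]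
  simp [Set.mem_Ioi]

lemma mem_HSet {a b r : ℝ} {z : ℝ × ℝ} :
    z ∈ HSet a b r ↔ (a ≤ z.1 ∧ z.1 ≤ b) ∧ (-r ≤ z.2 ∧ z.2 ≤ r) := by
  unfold HSet
  rw [Set.mem_prod, Set.mem_Icc, Set.mem_Icc]

lemma mem_LeftEdge {a r : ℝ} {z : ℝ × ℝ} :
    z ∈ LeftEdge a r ↔ z.1 = a ∧ (-r ≤ z.2 ∧ z.2 ≤ r) := by
  unfold LeftEdge
  rw [Set.mem_prod, Set.mem_singleton_iff, Set.mem_Icc]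

lemma mem_RightEdge {b r : ℝ} {z : ℝ × ℝ} :
    z ∈ RightEdge b r ↔ z.1 = b ∧ (-r ≤ z.2 ∧ z.2 ≤ r) := by
  unfold RightEdge
  rw [Set.mem_prod, Set.mem_singleton_iff, Set.mem_Icc]

lemma mem_HorizBdry {a b r : ℝ} {z : ℝ × ℝ} :
    z ∈ HorizBdry a b r ↔ (a ≤ z.1 ∧ z.1 ≤ b) ∧ (z.2 = -r ∨ z.2 = r) := by
  unfold HorizBdry
  rw [Set.mem_prod, Set.mem_Icc]
  simp [Set.mem_insert_iff]

/-- Two-dimensional topological horseshoe: two disjoint h-sets, each horizontally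
f-covering both, yield orbits following every finite itinerary. -/
theorem stmt_8 (f : ℝ × ℝ → ℝ × ℝ) (hf : Continuous f)
    (a b : Fin 2 → ℝ) (r : ℝ) (hr : 0 < r) (hab : ∀ i, a i ≤ b i)
    (hdisj : Disjoint (HSet (a 0) (b 0) r) (HSet (a 1) (b 1) r))
    (hcov : ∀ i j : Fin 2, CoversH f (a i) (b i) (a j) (b j) r) :
    ∀ n : ℕ, ∀ hn : 1 ≤ n, ∀ seq : Fin n → Fin 2,
      ∃ x ∈ interior (HSet (a (seq ⟨0, hn⟩)) (b (seq ⟨0, hn⟩)) r),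
        f^[n] x = x ∧
        ∀ j : Fin n, f^[(j : ℕ)] x ∈ interior (HSet (a (seq j)) (b (seq j)) r) := by
  classical
  intro n hn seq
  obtain ⟨m, rfl⟩ : ∃ m, n = m + 1 := ⟨n - 1, by omega⟩
  have hrr : -r ≤ r := by linarith
  -- every box is nondegenerate
  have hlt : ∀ i, a i < b i := by
    intro i
    rcases eq_or_lt_of_le (hab i) with heq | h
    · exfalso
      have hmemL : ((a i, 0) : ℝ × ℝ) ∈ LeftEdge (a i) r :=
        mem_LeftEdge.2 ⟨rfl, (by linarith : (-r : ℝ) ≤ 0), (by linarith : (0 : ℝ) ≤ r)⟩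
      have hmemR : ((a i, 0) : ℝ × ℝ) ∈ RightEdge (b i) r :=
        mem_RightEdge.2 ⟨heq, (by linarith : (-r : ℝ) ≤ 0), (by linarith : (0 : ℝ) ≤ r)⟩
      rcases (hcov i i).2 with ⟨h1, h2⟩ | ⟨h1, h2⟩
      · have ha' := mem_LeftSide.1 (h1 (Set.mem_image_of_mem f hmemL))
        have hb' := mem_RightSide.1 (h2 (Set.mem_image_of_mem f hmemR))
        rw [← heq] at hb'; linarith
      · have ha' := mem_RightSide.1 (h1 (Set.mem_image_of_mem f hmemL))
        have hb' := mem_LeftSide.1 (h2 (Set.mem_image_of_mem f hmemR))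
        rw [← heq] at ha'; linarith
    · exact h
  -- itinerary as a function on ℕ
  set I : ℕ → Fin 2 := fun j => seq ⟨j % (m + 1), Nat.mod_lt _ (by omega)⟩ with hIdef
  have hI0 : I 0 = seq ⟨0, hn⟩ := by
    simp only [hIdef]
    exact congrArg seq (Fin.ext (by simp))
  have hIn : I (m + 1) = I 0 := by
    simp only [hIdef]
    exact congrArg seq (Fin.ext (by simp))
  have hIj : ∀ j : Fin (m + 1), I (j : ℕ) = seq j := by
    intro j
    simp only [hIdef]
    exact congrArg seq (Fin.ext (by simp [Nat.mod_eq_of_lt j.isLt]))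
  -- parametrized edges and sides
  set E : Fin 2 → Bool → Set (ℝ × ℝ) :=
    fun i e => cond e (LeftEdge (a i) r) (RightEdge (b i) r) with hE
  set S : Fin 2 → Bool → Set (ℝ × ℝ) :=
    fun i e => cond e (LeftSide (a i)) (RightSide (b i)) with hS
  -- orientations
  have horient : ∀ i j : Fin 2, ∃ σ : Bool, ∀ e : Bool, f '' E i e ⊆ S j (xor σ e) := by
    intro i j
    rcases (hcov i j).2 with ⟨h1, h2⟩ | ⟨h1, h2⟩
    · refine ⟨false, ?_⟩
      intro e
      cases e
      · exact h2
      · exact h1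
    · refine ⟨true, ?_⟩
      intro e
      cases e
      · exact h2
      · exact h1
  choose σf hσ using horient
  -- compactness and nonemptiness of edges
  have hEcomp : ∀ (i : Fin 2) (e : Bool), IsCompact (E i e) ∧ (E i e).Nonempty := by
    intro i e
    cases e
    · constructor
      · simpa [hE, RightEdge] using (isCompact_singleton.prod isCompact_Icc)
      · exact ⟨(b i, 0), by
          simp only [hE, Bool.cond_false]
          exact mem_RightEdge.2 ⟨rfl, (by linarith : (-r : ℝ) ≤ 0), (by linarith : (0 : ℝ) ≤ r)⟩⟩
    · constructor
      · simpa [hE, LeftEdge] using (isCompact_singleton.prod isCompact_Icc)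
      · exact ⟨(a i, 0), by
          simp only [hE, Bool.cond_true]
          exact mem_LeftEdge.2 ⟨rfl, (by linarith : (-r : ℝ) ≤ 0), (by linarith : (0 : ℝ) ≤ r)⟩⟩
  -- a uniform margin ε
  have hεexists : ∀ (i j : Fin 2) (e : Bool), ∃ ε : ℝ, 0 < ε ∧ ∀ p ∈ E i e,
      (xor (σf i j) e = true → (f p).1 ≤ a j - ε) ∧
      (xor (σf i j) e = false → b j + ε ≤ (f p).1) := by
    intro i j e
    obtain ⟨hcomp, hne⟩ := hEcomp i e
    cases hxe : xor (σf i j) e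
    · obtain ⟨p₀, hp₀, hmin⟩ := hcomp.exists_isMinOn hne
        ((continuous_fst.comp hf).continuousOn)
      have hmem := hσ i j e (Set.mem_image_of_mem f hp₀)
      rw [hxe] at hmem
      have hgt : b j < (f p₀).1 := by
        have : f p₀ ∈ RightSide (b j) := by simpa [hS] using hmem
        exact mem_RightSide.1 this
      refine ⟨(f p₀).1 - b j, by linarith, ?_⟩
      intro p hp
      constructor
      · intro hcontra; exact absurd hcontra (by simp)
      · intro _
        have h5 : (f p₀).1 ≤ (f p).1 := hmin hp
        linarith
    · obtain ⟨p₀, hp₀, hmax⟩ := hcomp.exists_isMaxOn hne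
        ((continuous_fst.comp hf).continuousOn)
      have hmem := hσ i j e (Set.mem_image_of_mem f hp₀)
      rw [hxe] at hmem
      have hltp : (f p₀).1 < a j := by
        have : f p₀ ∈ LeftSide (a j) := by simpa [hS] using hmem
        exact mem_LeftSide.1 this
      refine ⟨a j - (f p₀).1, by linarith, ?_⟩
      intro p hp
      constructor
      · intro _
        have h5 : (f p).1 ≤ (f p₀).1 := hmax hp
        linarith
      · intro hcontra; exact absurd hcontra (by simp)
  choose εf hεf0 hεf using hεexists
  obtain ⟨ε, hε0, hεle⟩ : ∃ ε : ℝ, 0 < ε ∧ ∀ (i j : Fin 2) (e : Bool), ε ≤ εf i j e := by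
    refine ⟨Finset.univ.inf' (by simp) (fun x : Fin 2 × Fin 2 × Bool => εf x.1 x.2.1 x.2.2),
      ?_, ?_⟩
    · rw [Finset.lt_inf'_iff]
      rintro ⟨i, j, e⟩ -
      exact hεf0 i j e
    · intro i j e
      exact Finset.inf'_le _ (Finset.mem_univ (i, j, e))
  have hside : ∀ (i j : Fin 2) (e : Bool), ∀ p ∈ E i e,
      (xor (σf i j) e = true → (f p).1 ≤ a j - ε) ∧
      (xor (σf i j) e = false → b j + ε ≤ (f p).1) := by
    intro i j e p hp
    obtain ⟨h1, h2⟩ := hεf i j e p hp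
    constructor
    · intro hh; linarith [h1 hh, hεle i j e]
    · intro hh; linarith [h2 hh, hεle i j e]
  -- the clamping maps
  set c : Fin 2 → ℝ × ℝ → ℝ × ℝ :=
    fun i p => (clampR (a i) (b i) p.1, clampR (-r) r p.2) with hc
  have hcmem : ∀ (i : Fin 2) (p : ℝ × ℝ), c i p ∈ HSet (a i) (b i) r := by
    intro i p
    exact mem_HSet.2 ⟨by simpa using clampR_mem (hab i) p.1, by simpa using clampR_mem hrr p.2⟩
  have hcid : ∀ (i : Fin 2) (p : ℝ × ℝ), p ∈ HSet (a i) (b i) r → c i p = p := by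
    intro i p hp
    obtain ⟨h1, h2⟩ := mem_HSet.1 hp
    simp only [hc]
    rw [clampR_of_mem h1, clampR_of_mem h2]
  have hccont : ∀ i : Fin 2, Continuous (c i) := by
    intro i
    exact ((continuous_clampR _ _).comp continuous_fst).prodMk
      ((continuous_clampR _ _).comp continuous_snd)
  have hcside : ∀ (j : Fin 2) (e : Bool) (z : ℝ × ℝ), z ∈ S j e → c j z ∈ E j e := by
    intro j e z hz
    cases e
    · have hgt : b j < z.1 := mem_RightSide.1 (by simpa [hS] using hz)
      have h1 : clampR (a j) (b j) z.1 = b j := by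
        rw [clampR]
        rw [min_eq_right hgt.le]
        exact max_eq_right (hab j)
      simp only [hE, Bool.cond_false]
      exact mem_RightEdge.2 ⟨by simp [hc, h1], by simpa using clampR_mem hrr z.2⟩
    · have hltz : z.1 < a j := mem_LeftSide.1 (by simpa [hS] using hz)
      have h1 : clampR (a j) (b j) z.1 = a j := by
        rw [clampR]
        rw [min_eq_left (by linarith [hab j] : z.1 ≤ b j)]
        exact max_eq_left hltz.le
      simp only [hE, Bool.cond_true]
      exact mem_LeftEdge.2 ⟨by simp [hc, h1], by simpa using clampR_mem hrr z.2⟩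
  -- the clamped orbit maps
  set F : ℕ → (ℝ × ℝ) → (ℝ × ℝ) := fun j q => c (I (j + 1)) (f q) with hF
  set Q : ℕ → (ℝ × ℝ) → (ℝ × ℝ) := seqMap F with hQ
  have hQ0 : ∀ p, Q 0 p = p := fun p => rfl
  have hQs : ∀ (j : ℕ) (p), Q (j + 1) p = c (I (j + 1)) (f (Q j p)) := fun j p => rfl
  have hQcont : ∀ j, Continuous (Q j) := by
    intro j
    induction j with
    | zero => exact continuous_id
    | succ j ih =>
        have : Q (j + 1) = fun p => c (I (j + 1)) (f (Q j p)) := rfl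
        rw [this]
        exact (hccont _).comp (hf.comp ih)
  have hQmem : ∀ (j : ℕ) (p), Q (j + 1) p ∈ HSet (a (I (j + 1))) (b (I (j + 1))) r := by
    intro j p
    rw [hQs]
    exact hcmem _ _
  have hQmem0 : ∀ p ∈ HSet (a (I 0)) (b (I 0)) r, ∀ j, Q j p ∈ HSet (a (I j)) (b (I j)) r := by
    intro p hp j
    cases j with
    | zero => exact hp
    | succ j => exact hQmem j p
  -- boolean edge tracking
  set Eb : ℕ → Bool := boolSeq (fun j x => xor (σf (I j) (I (j + 1))) x) with hEb
  have hEb0 : Eb 0 = false := rfl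
  have hEbs : ∀ j, Eb (j + 1) = xor (σf (I j) (I (j + 1))) (Eb j) := fun j => rfl
  have hEdge : ∀ (j : ℕ) (e : Bool) (p : ℝ × ℝ), p ∈ E (I 0) e →
      Q j p ∈ E (I j) (xor (Eb j) e) := by
    intro j
    induction j with
    | zero =>
        intro e p hp
        rw [hEb0]
        simpa [hQ0] using hp
    | succ j ih =>
        intro e p hp
        have h1 := ih e p hp
        have h2 := hσ (I j) (I (j + 1)) (xor (Eb j) e) (Set.mem_image_of_mem f h1)
        have h3 := hcside (I (j + 1)) _ _ h2
        rw [hQs]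
        have hxoreq : xor (σf (I j) (I (j + 1))) (xor (Eb j) e) = xor (Eb (j + 1)) e := by
          rw [hEbs]
          exact (Bool.xor_assoc _ _ _).symm
        rw [hxoreq] at h3
        exact h3
  -- final displacement estimate for edge points
  have hdisp : ∀ (e : Bool) (p : ℝ × ℝ), p ∈ E (I 0) e →
      (xor (Eb (m + 1)) e = true → (f (Q m p)).1 ≤ a (I 0) - ε) ∧
      (xor (Eb (m + 1)) e = false → b (I 0) + ε ≤ (f (Q m p)).1) := by
    intro e p hp
    have h1 := hEdge m e p hp
    have h2 := hside (I m) (I (m + 1)) (xor (Eb m) e) (Q m p) h1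
    have hxoreq : xor (σf (I m) (I (m + 1))) (xor (Eb m) e) = xor (Eb (m + 1)) e := by
      rw [hEbs]
      exact (Bool.xor_assoc _ _ _).symm
    rw [hxoreq, hIn] at h2
    exact h2
  -- the Poincaré–Miranda displacement map
  set G : ℝ × ℝ → ℝ × ℝ := fun p =>
    (clampR (a (I 0) - ε) (b (I 0) + ε) (f (Q m p)).1, clampR (-r) r (f (Q m p)).2) with hG
  set H : ℝ × ℝ → ℝ × ℝ := fun p => ((G p).1 - p.1, (G p).2 - p.2) with hH
  have hGcont : Continuous G := by
    apply Continuous.prodMk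
    · exact (continuous_clampR _ _).comp (continuous_fst.comp (hf.comp (hQcont m)))
    · exact (continuous_clampR _ _).comp (continuous_snd.comp (hf.comp (hQcont m)))
  have hHcont : Continuous H :=
    ((continuous_fst.comp hGcont).sub continuous_fst).prodMk
      ((continuous_snd.comp hGcont).sub continuous_snd)
  have haεb : a (I 0) - ε ≤ b (I 0) + ε := by linarith [hlt (I 0)]
  -- boundary conditions
  have hLedge : ∀ y ∈ Set.Icc (-r) r, ((a (I 0), y) : ℝ × ℝ) ∈ E (I 0) true := by
    intro y hy
    simp only [hE, Bool.cond_true]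
    exact mem_LeftEdge.2 ⟨rfl, hy.1, hy.2⟩
  have hRedge : ∀ y ∈ Set.Icc (-r) r, ((b (I 0), y) : ℝ × ℝ) ∈ E (I 0) false := by
    intro y hy
    simp only [hE, Bool.cond_false]
    exact mem_RightEdge.2 ⟨rfl, hy.1, hy.2⟩
  have hLR : (∀ y ∈ Set.Icc (-r) r, (H (a (I 0), y)).1 < 0 ∧ 0 < (H (b (I 0), y)).1) ∨
      (∀ y ∈ Set.Icc (-r) r, 0 < (H (a (I 0), y)).1 ∧ (H (b (I 0), y)).1 < 0) := by
    cases hEbm : Eb (m + 1)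
    · left
      intro y hy
      constructor
      · have h1 := (hdisp true _ (hLedge y hy)).1 (by rw [hEbm]; rfl)
        have h2 : clampR (a (I 0) - ε) (b (I 0) + ε) (f (Q m (a (I 0), y))).1 = a (I 0) - ε := by
          rw [clampR, min_eq_left (by linarith), max_eq_left (by linarith)]
        simp only [hH, hG, h2]
        linarith
      · have h1 := (hdisp false _ (hRedge y hy)).2 (by rw [hEbm]; rfl)
        have h2 : clampR (a (I 0) - ε) (b (I 0) + ε) (f (Q m (b (I 0), y))).1 = b (I 0) + ε := by
          rw [clampR, min_eq_right (by linarith), max_eq_right (by linarith)]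
        simp only [hH, hG, h2]
        linarith
    · right
      intro y hy
      constructor
      · have h1 := (hdisp true _ (hLedge y hy)).2 (by rw [hEbm]; rfl)
        have h2 : clampR (a (I 0) - ε) (b (I 0) + ε) (f (Q m (a (I 0), y))).1 = b (I 0) + ε := by
          rw [clampR, min_eq_right (by linarith), max_eq_right (by linarith)]
        simp only [hH, hG, h2]
        linarith [hlt (I 0)]
      · have h1 := (hdisp false _ (hRedge y hy)).1 (by rw [hEbm]; rfl)
        have h2 : clampR (a (I 0) - ε) (b (I 0) + ε) (f (Q m (b (I 0), y))).1 = a (I 0) - ε := by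
          rw [clampR, min_eq_left (by linarith), max_eq_left (by linarith)]
        simp only [hH, hG, h2]
        linarith [hlt (I 0)]
  have hBo : ∀ x ∈ Set.Icc (a (I 0)) (b (I 0)), 0 ≤ (H (x, -r)).2 := by
    intro x hx
    simp only [hH, hG]
    have := (clampR_mem hrr (f (Q m (x, -r))).2).1
    simpa using (by linarith : (0 : ℝ) ≤ clampR (-r) r (f (Q m (x, -r))).2 - (-r))
  have hTo : ∀ x ∈ Set.Icc (a (I 0)) (b (I 0)), (H (x, r)).2 ≤ 0 := by
    intro x hx
    simp only [hH, hG]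
    have := (clampR_mem hrr (f (Q m (x, r))).2).2
    simpa using (by linarith : clampR (-r) r (f (Q m (x, r))).2 - r ≤ (0 : ℝ))
  obtain ⟨p, hpK, hHz⟩ := pm (a (I 0)) (b (I 0)) (-r) r (hlt _) (by linarith) H hHcont hLR hBo hTo
  have hGp : G p = p := by
    have h1 : (H p).1 = 0 := by rw [hHz]; rfl
    have h2 : (H p).2 = 0 := by rw [hHz]; rfl
    simp only [hH] at h1 h2
    exact Prod.ext (by linarith) (by linarith)
  have hpH : p ∈ HSet (a (I 0)) (b (I 0)) r := hpK
  have hp1 : p.1 ∈ Set.Icc (a (I 0)) (b (I 0)) := hpK.1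
  have hp2 : p.2 ∈ Set.Icc (-r) r := hpK.2
  -- recovery of the true orbit
  set X : ℝ := (f (Q m p)).1 with hX
  have hXeq : X = p.1 := by
    have h1 : clampR (a (I 0) - ε) (b (I 0) + ε) X = p.1 := congrArg Prod.fst hGp
    have hXmem : X ∈ Set.Icc (a (I 0)) (b (I 0)) := by
      by_contra hXn
      rw [Set.mem_Icc] at hXn
      push_neg at hXn
      rcases le_or_gt (a (I 0)) X with hcase | hcase
      · have hXb := hXn hcase
        have : b (I 0) < clampR (a (I 0) - ε) (b (I 0) + ε) X := by
          rw [clampR]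
          have : b (I 0) < min X (b (I 0) + ε) := lt_min hXb (by linarith)
          exact lt_of_lt_of_le this (le_max_right _ _)
        rw [h1] at this
        linarith [hp1.2]
      · have : clampR (a (I 0) - ε) (b (I 0) + ε) X < a (I 0) := by
          rw [clampR]
          have hminx : min X (b (I 0) + ε) = X := min_eq_left (by linarith [hlt (I 0)])
          rw [hminx]
          exact max_lt (by linarith) hcase
        rw [h1] at this
        linarith [hp1.1]
    rw [← h1]
    exact (clampR_of_mem ⟨by linarith [hXmem.1], by linarith [hXmem.2]⟩).symm
  have hXIcc : X ∈ Set.Icc (a (I 0)) (b (I 0)) := hXeq ▸ hp1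
  -- no iterate lies on a vertical edge
  have hnoedge : ∀ j, j ≤ m → ∀ e : Bool, Q j p ∉ E (I j) e := by
    intro j hj e hmem
    have hprop : ∀ k, j + k ≤ m → ∃ e', Q (j + k) p ∈ E (I (j + k)) e' := by
      intro k
      induction k with
      | zero => intro _; exact ⟨e, hmem⟩
      | succ k ih =>
          intro hk
          obtain ⟨e', he'⟩ := ih (by omega)
          have h2 := hσ (I (j + k)) (I (j + k + 1)) e' (Set.mem_image_of_mem f he')
          refine ⟨xor (σf (I (j + k)) (I (j + k + 1))) e', ?_⟩
          rw [show j + (k + 1) = (j + k) + 1 from rfl, hQs]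
          exact hcside _ _ _ h2
    obtain ⟨e', he'⟩ := hprop (m - j) (by omega)
    rw [show j + (m - j) = m from by omega] at he'
    have h2 := hside (I m) (I (m + 1)) e' (Q m p) he'
    rw [hIn] at h2
    cases hxy : xor (σf (I m) (I 0)) e'
    · have := h2.2 hxy
      rw [← hX] at this
      linarith [hXIcc.2]
    · have := h2.1 hxy
      rw [← hX] at this
      linarith [hXIcc.1]
  -- intermediate steps are genuine and interior
  have hstep : ∀ j, j + 1 ≤ m →
      Q (j + 1) p = f (Q j p) ∧
      (f (Q j p)).1 ∈ Set.Ioo (a (I (j + 1))) (b (I (j + 1))) ∧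
      (f (Q j p)).2 ∈ Set.Ioo (-r) r := by
    intro j hj
    have hqj : Q j p ∈ HSet (a (I j)) (b (I j)) r := hQmem0 p hpH j
    have hcov' := (hcov (I j) (I (j + 1))).1 (Set.mem_image_of_mem f hqj)
    obtain ⟨hY1, hY2⟩ := hcov'
    set Y := f (Q j p) with hYdef
    have hYH : Y ∈ HSet (a (I (j + 1))) (b (I (j + 1))) r := by
      rcases hY1 with (hL' | hH') | hR'
      · exfalso
        have hSid : Y ∈ S (I (j + 1)) true := by simpa [hS] using hL'
        have := hcside _ _ _ hSid
        rw [← hQs] at this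
        exact hnoedge (j + 1) hj true this
      · exact hH'
      · exfalso
        have hSid : Y ∈ S (I (j + 1)) false := by simpa [hS] using hR'
        have := hcside _ _ _ hSid
        rw [← hQs] at this
        exact hnoedge (j + 1) hj false this
    obtain ⟨hYx, hYy⟩ := mem_HSet.1 hYH
    have hYyopen : Y.2 ∈ Set.Ioo (-r) r := by
      have hnb : ¬((a (I (j+1)) ≤ Y.1 ∧ Y.1 ≤ b (I (j+1))) ∧ (Y.2 = -r ∨ Y.2 = r)) :=
        fun hcon => hY2 (mem_HorizBdry.2 hcon)
      push_neg at hnb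
      have := hnb hYx
      constructor
      · exact lt_of_le_of_ne hYy.1 (Ne.symm (by tauto))
      · exact lt_of_le_of_ne hYy.2 (by tauto)
    have hQeq : Q (j + 1) p = Y := by
      rw [hQs]
      exact hcid _ _ hYH
    have hYxopen : Y.1 ∈ Set.Ioo (a (I (j + 1))) (b (I (j + 1))) := by
      constructor
      · rcases eq_or_lt_of_le hYx.1 with heq | h
        · exfalso
          apply hnoedge (j + 1) hj true
          rw [hQeq]
          simp only [hE, Bool.cond_true]
          exact mem_LeftEdge.2 ⟨heq.symm, hYy.1, hYy.2⟩
        · exact h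
      · rcases eq_or_lt_of_le hYx.2 with heq | h
        · exfalso
          apply hnoedge (j + 1) hj false
          rw [hQeq]
          simp only [hE, Bool.cond_false]
          exact mem_RightEdge.2 ⟨heq, hYy.1, hYy.2⟩
        · exact h
    exact ⟨hQeq, hYxopen, hYyopen⟩
  -- the final step closes up
  have hfinal : f (Q m p) = p ∧ p.1 ∈ Set.Ioo (a (I 0)) (b (I 0)) ∧ p.2 ∈ Set.Ioo (-r) r := by
    have hqm : Q m p ∈ HSet (a (I m)) (b (I m)) r := hQmem0 p hpH m
    have hcov' := (hcov (I m) (I (m + 1))).1 (Set.mem_image_of_mem f hqm)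
    rw [hIn] at hcov'
    obtain ⟨hY1, hY2⟩ := hcov'
    set Y := f (Q m p) with hYdef
    have hY1x : Y.1 = p.1 := hXeq
    have hYH : Y ∈ HSet (a (I 0)) (b (I 0)) r := by
      rcases hY1 with (hL' | hH') | hR'
      · exfalso
        have := mem_LeftSide.1 hL'
        rw [hY1x] at this
        linarith [hp1.1]
      · exact hH'
      · exfalso
        have := mem_RightSide.1 hR'
        rw [hY1x] at this
        linarith [hp1.2]
    obtain ⟨hYx, hYy⟩ := mem_HSet.1 hYH
    have hYyopen : Y.2 ∈ Set.Ioo (-r) r := by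
      have hnb : ¬((a (I 0) ≤ Y.1 ∧ Y.1 ≤ b (I 0)) ∧ (Y.2 = -r ∨ Y.2 = r)) :=
        fun hcon => hY2 (mem_HorizBdry.2 hcon)
      push_neg at hnb
      have := hnb hYx
      constructor
      · exact lt_of_le_of_ne hYy.1 (Ne.symm (by tauto))
      · exact lt_of_le_of_ne hYy.2 (by tauto)
    have hYp : Y = p := by
      have hG1 : (G p).1 = Y.1 := by
        simp only [hG]
        exact clampR_of_mem ⟨by linarith [hYx.1], by linarith [hYx.2]⟩
      have hG2 : (G p).2 = Y.2 := by
        simp only [hG]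
        exact clampR_of_mem ⟨hYy.1, hYy.2⟩
      have := hGp
      exact Prod.ext (by rw [← hG1, this]) (by rw [← hG2, this])
    have hp2open : p.2 ∈ Set.Ioo (-r) r := by rw [← hYp]; exact hYyopen
    have hp1open : p.1 ∈ Set.Ioo (a (I 0)) (b (I 0)) := by
      constructor
      · rcases eq_or_lt_of_le hp1.1 with heq | h
        · exfalso
          apply hnoedge 0 (by omega) true
          rw [hQ0]
          simp only [hE, Bool.cond_true]
          exact mem_LeftEdge.2 ⟨heq.symm, hp2.1, hp2.2⟩
        · exact h
      · rcases eq_or_lt_of_le hp1.2 with heq | h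
        · exfalso
          apply hnoedge 0 (by omega) false
          rw [hQ0]
          simp only [hE, Bool.cond_false]
          exact mem_RightEdge.2 ⟨heq, hp2.1, hp2.2⟩
        · exact h
    exact ⟨hYp, hp1open, hp2open⟩
  -- iterates agree with Q
  have hiter : ∀ j, j ≤ m → f^[j] p = Q j p := by
    intro j
    induction j with
    | zero => intro _; simp [hQ0]
    | succ j ih =>
        intro hj
        rw [Function.iterate_succ_apply', ih (by omega), (hstep j hj).1]
  have hperiodic : f^[m + 1] p = p := by
    rw [Function.iterate_succ_apply', hiter m le_rfl]
    exact hfinal.1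
  -- interior helper
  have hint : ∀ (i : Fin 2) (z : ℝ × ℝ), z.1 ∈ Set.Ioo (a i) (b i) → z.2 ∈ Set.Ioo (-r) r →
      z ∈ interior (HSet (a i) (b i) r) := by
    intro i z h1 h2
    have hsub : Set.Ioo (a i) (b i) ×ˢ Set.Ioo (-r) r ⊆ HSet (a i) (b i) r :=
      Set.prod_mono Set.Ioo_subset_Icc_self Set.Ioo_subset_Icc_self
    have hop : IsOpen (Set.Ioo (a i) (b i) ×ˢ Set.Ioo (-r) r) := isOpen_Ioo.prod isOpen_Ioo
    exact interior_maximal hsub hop ⟨h1, h2⟩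
  have hintmem : ∀ j, j ≤ m → f^[j] p ∈ interior (HSet (a (I j)) (b (I j)) r) := by
    intro j hj
    cases j with
    | zero =>
        simp only [Function.iterate_zero_apply]
        exact hint _ _ hfinal.2.1 hfinal.2.2
    | succ j =>
        rw [hiter _ hj, (hstep j hj).1]
        exact hint _ _ (hstep j hj).2.1 (hstep j hj).2.2
  refine ⟨p, ?_, hperiodic, ?_⟩
  · have := hintmem 0 (by omega)
    rw [hI0] at this
    simpa using this
  · intro j
    have hjm : (j : ℕ) ≤ m := Nat.lt_succ_iff.mp j.isLt
    have := hintmem (j : ℕ) hjm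
    rw [hIj j] at this
    exact this

end
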